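/- arXiv:1203.5930 — 3 statements merged into one kernel-verified Lean document; each statement's English description precedes it below -/
import Mathlib

section
/- Let (π_n) be a sequence of Borel probability measures on ]0,+∞[ such that π_n converges narrowly to π, sup_n ∫(1/τ)π_n(dτ) < +∞, and the normalized measures π̃_n(dτ) := (1/τ)π_n(dτ)/∫(1/s)π_n(ds) form a tight family in P(]0,+∞]) with limit concentrated on ]0,+∞[. Then ∫(1/τ)π_n(dτ) → ∫(1/τ)π(dτ) < +∞. -/
open MeasureTheory Filter Set BoundedContinuousFunction

/-- Truncated reciprocal `x ↦ (max x δ)⁻¹` as a bounded continuous function. -/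
noncomputable def truncInv (δ : ℝ) (hδ : 0 < δ) : ℝ →ᵇ ℝ :=
  BoundedContinuousFunction.ofNormedAddCommGroup (fun x => (max x δ)⁻¹)
    (Continuous.inv₀ (continuous_id.max continuous_const)
      (fun x => ne_of_gt (lt_of_lt_of_le hδ (le_max_right x δ))))
    δ⁻¹
    (fun x => by
      rw [Real.norm_eq_abs,
        abs_of_nonneg (inv_nonneg.mpr (le_of_lt (lt_of_lt_of_le hδ (le_max_right x δ))))]
      exact inv_anti₀ hδ (le_max_right x δ))

lemma truncInv_apply (δ : ℝ) (hδ : 0 < δ) (x : ℝ) : truncInv δ hδ x = (max x δ)⁻¹ := rfl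

/-- If `π_n → π` narrowly, `sup_n ∫(1/τ)dπ_n < ∞`, and the size-biased normalized
measures `π̃_n(dτ) = (1/τ)π_n(dτ)/∫(1/s)π_n(ds)` are uniformly tight in `]0,+∞[`
(no mass near `0` nor near `+∞`, uniformly in `n`), then
`∫(1/τ)dπ_n → ∫(1/τ)dπ < +∞`. -/
theorem stmt7 (π : ℕ → Measure ℝ) (πlim : Measure ℝ)
    (hp : ∀ n, IsProbabilityMeasure (π n)) [IsProbabilityMeasure πlim]
    (hs : ∀ n, π n (Set.Ioi (0:ℝ))ᶜ = 0) (hsl : πlim (Set.Ioi (0:ℝ))ᶜ = 0)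
    (hnarrow : ∀ f : ℝ →ᵇ ℝ,
      Tendsto (fun n => ∫ x, f x ∂π n) atTop (nhds (∫ x, f x ∂πlim)))
    (C : ℝ) (hC : ∀ n, ∫⁻ τ, ENNReal.ofReal (1 / τ) ∂π n ≤ ENNReal.ofReal C)
    (htight : ∀ ε : ℝ, 0 < ε → ∃ δ M : ℝ, 0 < δ ∧ 0 < M ∧ ∀ n,
      (π n).withDensity (fun τ => ENNReal.ofReal (1 / τ)) (Set.Ioo 0 δ)
        + (π n).withDensity (fun τ => ENNReal.ofReal (1 / τ)) (Set.Ioi M)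
        < ENNReal.ofReal ε * ∫⁻ τ, ENNReal.ofReal (1 / τ) ∂π n) :
    Tendsto (fun n => ∫⁻ τ, ENNReal.ofReal (1 / τ) ∂π n) atTop
        (nhds (∫⁻ τ, ENNReal.ofReal (1 / τ) ∂πlim)) ∧
      ∫⁻ τ, ENNReal.ofReal (1 / τ) ∂πlim < ⊤ := by
  have hmeas : Measurable fun τ : ℝ => ENNReal.ofReal (1 / τ) :=
    (measurable_const.div measurable_id).ennreal_ofReal
  have hgmeas : ∀ δ : ℝ, Measurable fun x : ℝ => ENNReal.ofReal ((max x δ)⁻¹) :=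
    fun δ => ((measurable_id.max measurable_const).inv).ennreal_ofReal
  set F : ℕ → ENNReal := fun n => ∫⁻ τ, ENNReal.ofReal (1 / τ) ∂π n with hFdef
  set Fl : ENNReal := ∫⁻ τ, ENNReal.ofReal (1 / τ) ∂πlim with hFldef
  set L : ℕ → ℝ → ENNReal := fun n δ => ∫⁻ x, ENNReal.ofReal ((max x δ)⁻¹) ∂π n with hLdef
  set Ll : ℝ → ENNReal := fun δ => ∫⁻ x, ENNReal.ofReal ((max x δ)⁻¹) ∂πlim with hLldef
  have hae : ∀ n, ∀ᵐ x ∂π n, 0 < x := by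
    intro n
    rw [ae_iff]
    convert hs n using 2
    ext x; simp
  have haeL : ∀ᵐ x ∂πlim, 0 < x := by
    rw [ae_iff]
    convert hsl using 2
    ext x; simp
  -- pointwise inequality (i): g δ x ≤ 1/x for x > 0
  have hpt1 : ∀ (δ x : ℝ), 0 < δ → 0 < x →
      ENNReal.ofReal ((max x δ)⁻¹) ≤ ENNReal.ofReal (1 / x) := by
    intro δ x hδ hx
    apply ENNReal.ofReal_le_ofReal
    rw [one_div]
    exact inv_anti₀ hx (le_max_left x δ)
  -- (1): L n δ ≤ F n
  have hLle : ∀ (n : ℕ) (δ : ℝ), 0 < δ → L n δ ≤ F n := by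
    intro n δ hδ
    apply lintegral_mono_ae
    filter_upwards [hae n] with x hx
    exact hpt1 δ x hδ hx
  have hLlle : ∀ (δ : ℝ), 0 < δ → Ll δ ≤ Fl := by
    intro δ hδ
    apply lintegral_mono_ae
    filter_upwards [haeL] with x hx
    exact hpt1 δ x hδ hx
  -- (2): F n ≤ L n δ + ν_n(Ioo 0 δ)
  have hFle : ∀ (n : ℕ) (δ : ℝ), 0 < δ →
      F n ≤ L n δ +
        (π n).withDensity (fun τ => ENNReal.ofReal (1 / τ)) (Set.Ioo 0 δ) := by
    intro n δ hδ
    rw [withDensity_apply _ measurableSet_Ioo, ← lintegral_indicator measurableSet_Ioo,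
      hLdef]
    rw [← lintegral_add_left (hgmeas δ)]
    apply lintegral_mono_ae
    filter_upwards [hae n] with x hx
    by_cases hxδ : x < δ
    · have hmem : x ∈ Set.Ioo (0:ℝ) δ := ⟨hx, hxδ⟩
      rw [Set.indicator_of_mem hmem]
      exact le_add_self
    · push_neg at hxδ
      have hmem : x ∉ Set.Ioo (0:ℝ) δ := fun h => absurd h.2 (not_lt.mpr hxδ)
      rw [Set.indicator_of_notMem hmem, add_zero, max_eq_left hxδ, one_div]
  -- (3): narrow convergence transfer
  have hLintrep : ∀ (μ : Measure ℝ) [IsProbabilityMeasure μ] (δ : ℝ) (hδ : 0 < δ),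
      ∫⁻ x, ENNReal.ofReal ((max x δ)⁻¹) ∂μ
        = ENNReal.ofReal (∫ x, truncInv δ hδ x ∂μ) := by
    intro μ _ δ hδ
    rw [MeasureTheory.ofReal_integral_eq_lintegral_ofReal
      ((truncInv δ hδ).integrable μ)]
    · rfl
    · filter_upwards with x
      exact inv_nonneg.mpr (le_of_lt (lt_of_lt_of_le hδ (le_max_right x δ)))
  have hLtend : ∀ (δ : ℝ), 0 < δ → Tendsto (fun n => L n δ) atTop (nhds (Ll δ)) := by
    intro δ hδ
    have h1 : ∀ n, L n δ = ENNReal.ofReal (∫ x, truncInv δ hδ x ∂π n) := by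
      intro n
      have := hp n
      exact hLintrep (π n) δ hδ
    have h2 : Ll δ = ENNReal.ofReal (∫ x, truncInv δ hδ x ∂πlim) := hLintrep πlim δ hδ
    simp only [h1, h2]
    exact (ENNReal.continuous_ofReal.tendsto _).comp (hnarrow (truncInv δ hδ))
  -- (4): monotone convergence along δ_k = (k+1)⁻¹
  have hmono : Tendsto (fun k : ℕ => Ll ((k+1:ℝ)⁻¹)) atTop (nhds Fl) := by
    apply lintegral_tendsto_of_tendsto_of_monotone
    · intro k; exact (hgmeas _).aemeasurable
    · filter_upwards [haeL] with x hx
      intro k m hkm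
      apply ENNReal.ofReal_le_ofReal
      apply inv_anti₀ (lt_of_lt_of_le hx (le_max_left _ _))
      apply max_le_max le_rfl
      apply inv_anti₀ (by positivity)
      exact_mod_cast by omega
    · filter_upwards [haeL] with x hx
      have hev : ∀ᶠ k : ℕ in atTop,
          ENNReal.ofReal ((max x ((k+1:ℝ)⁻¹))⁻¹) = ENNReal.ofReal (1 / x) := by
        obtain ⟨k₀, hk₀⟩ := exists_nat_gt x⁻¹
        filter_upwards [eventually_ge_atTop k₀] with k hk
        have h1 : ((k:ℝ)+1)⁻¹ ≤ x := by
          rw [inv_le_comm₀ (by positivity) hx]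
          calc x⁻¹ ≤ (k₀:ℝ) := le_of_lt hk₀
          _ ≤ (k:ℝ) := by exact_mod_cast hk
          _ ≤ (k:ℝ)+1 := by linarith
        rw [max_eq_left h1, one_div]
      exact Tendsto.congr' (Filter.EventuallyEq.symm hev) tendsto_const_nhds
  -- lower bound: Fl ≤ liminf F
  have hliminf : Fl ≤ atTop.liminf F := by
    apply le_of_tendsto' hmono
    intro k
    have h1 : Ll ((k+1:ℝ)⁻¹) = atTop.liminf (fun n => L n ((k+1:ℝ)⁻¹)) :=
      ((hLtend _ (by positivity)).liminf_eq).symm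
    rw [h1]
    exact liminf_le_liminf (Eventually.of_forall fun n => hLle n _ (by positivity))
  -- Fl finite
  have hFlC : Fl ≤ ENNReal.ofReal C := by
    apply le_of_tendsto' hmono
    intro k
    apply le_of_tendsto (hLtend _ (by positivity))
    filter_upwards with n
    exact le_trans (hLle n _ (by positivity)) (hC n)
  have hFlfin : Fl < ⊤ := lt_of_le_of_lt hFlC ENNReal.ofReal_lt_top
  -- upper bound on limsup
  have hlimsup' : ∀ ε : ℝ, 0 < ε →
      atTop.limsup F ≤ Fl + ENNReal.ofReal ε * ENNReal.ofReal C := by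
    intro ε hε
    obtain ⟨δ, M, hδ, hM, hb⟩ := htight ε hε
    have key : ∀ n, F n ≤ L n δ + ENNReal.ofReal ε * ENNReal.ofReal C := by
      intro n
      calc F n ≤ L n δ + (π n).withDensity (fun τ => ENNReal.ofReal (1 / τ)) (Set.Ioo 0 δ) :=
            hFle n δ hδ
        _ ≤ L n δ + ((π n).withDensity (fun τ => ENNReal.ofReal (1 / τ)) (Set.Ioo 0 δ)
              + (π n).withDensity (fun τ => ENNReal.ofReal (1 / τ)) (Set.Ioi M)) := by
            apply add_le_add_right le_self_add
        _ ≤ L n δ + ENNReal.ofReal ε * F n := add_le_add_right (le_of_lt (hb n)) _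
        _ ≤ L n δ + ENNReal.ofReal ε * ENNReal.ofReal C := by
            exact add_le_add_right (mul_le_mul_right (hC n) _) _
    calc atTop.limsup F
        ≤ atTop.limsup (fun n => L n δ + ENNReal.ofReal ε * ENNReal.ofReal C) :=
          limsup_le_limsup (Eventually.of_forall key)
      _ = Ll δ + ENNReal.ofReal ε * ENNReal.ofReal C :=
          (((hLtend δ hδ).add tendsto_const_nhds).limsup_eq)
      _ ≤ Fl + ENNReal.ofReal ε * ENNReal.ofReal C :=
          add_le_add_left (hLlle δ hδ) _
  have hlimsup : atTop.limsup F ≤ Fl := by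
    apply ENNReal.le_of_forall_pos_le_add
    intro η hη _
    have hden : (0:ℝ) < max C 1 := lt_of_lt_of_le one_pos (le_max_right C 1)
    have hε : (0:ℝ) < (η:ℝ) / max C 1 := div_pos (by exact_mod_cast hη) hden
    refine le_trans (hlimsup' _ hε) ?_
    apply add_le_add_right
    rw [← ENNReal.ofReal_mul (le_of_lt hε)]
    calc ENNReal.ofReal ((η:ℝ) / max C 1 * C)
        ≤ ENNReal.ofReal ((η:ℝ) / max C 1 * max C 1) := by
          apply ENNReal.ofReal_le_ofReal
          exact mul_le_mul_of_nonneg_left (le_max_left C 1) (le_of_lt hε)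
      _ = ENNReal.ofReal (η:ℝ) := by rw [div_mul_cancel₀ _ (ne_of_gt hden)]
      _ = (η : ENNReal) := ENNReal.ofReal_coe_nnreal
  exact ⟨tendsto_of_le_liminf_of_limsup_le hliminf hlimsup, hFlfin⟩
end

section
/- Let μ ∈ P(E×[0,+∞]) and Q : E×E → [0,+∞[ with Σ_y Q(x₀,y) > μ(x₀, 1/τ) := ∫(1/τ) μ(x₀,dτ) for some x₀ ∈ E. Then for every M > 0, choosing h_{x₀}(τ) = −M/τ (and h ≡ 0, H ≡ 0 elsewhere), the tilted functional satisfies I_{h,H}(μ,Q) ≥ M·(Σ_y Q(x₀,y) − μ(x₀,1/τ)), and hence sup over admissible (h,H) of I_{h,H}(μ,Q) = +∞. -/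
open MeasureTheory Filter Set Finset

/-- If `Σ_y Q(x₀,y) > μ(x₀,1/τ)` for some `x₀`, then taking
`h_{x₀}(τ) = -M/τ` (and `h ≡ 0`, `H ≡ 0` elsewhere) in the tilted functional
`I_{h,H}(μ,Q) = Σ_{x,y} Q(x,y)(H(x,y) - log Σ_z p(x,z)e^{H(x,z)})
 + Σ_x (∫ μ(x,dτ) h_x(τ) - Σ_y Q(x,y) log ∫ ψ_x(ds) e^{s h_x(s)})`
gives `I_{h,H}(μ,Q) ≥ M (Σ_y Q(x₀,y) - μ(x₀,1/τ))`, and hence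
`sup_{h,H} I_{h,H}(μ,Q) = +∞`. -/
theorem stmt18 (E : Type*) [Fintype E] [DecidableEq E]
    (p : E → E → ℝ) (hp0 : ∀ x y, 0 ≤ p x y) (hp1 : ∀ x, ∑ y, p x y = 1)
    (ψ : E → Measure ℝ) (hψ : ∀ x, IsProbabilityMeasure (ψ x))
    (hψs : ∀ x, ψ x (Set.Ioi (0:ℝ))ᶜ = 0)
    (μ : E → Measure ℝ) (hμ : ∀ x, IsFiniteMeasure (μ x))
    (hμs : ∀ x, μ x (Set.Ioi (0:ℝ))ᶜ = 0)
    (Q : E → E → ℝ) (hQ0 : ∀ x y, 0 ≤ Q x y)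
    (I : (E → ℝ → ℝ) → (E → E → ℝ) → ℝ)
    (hI : ∀ h H, I h H =
      (∑ x, ∑ y, Q x y * (H x y - Real.log (∑ z, p x z * Real.exp (H x z))))
        + ∑ x, ((∫ s, h x s ∂μ x)
            - ∑ y, Q x y * Real.log (∫ s, Real.exp (s * h x s) ∂ψ x)))
    (x₀ : E) (hint : Integrable (fun s => 1 / s) (μ x₀))
    (hgap : ∫ s, 1 / s ∂μ x₀ < ∑ y, Q x₀ y) :
    (∀ M : ℝ, 0 < M →
      M * ((∑ y, Q x₀ y) - ∫ s, 1 / s ∂μ x₀) ≤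
        I (fun x s => if x = x₀ then -M / s else 0) 0) ∧
    (⨆ h : E → ℝ → ℝ, ⨆ H : E → E → ℝ, ((I h H : ℝ) : EReal)) = ⊤ := by
  have gap_pos : 0 < (∑ y, Q x₀ y) - ∫ s, 1 / s ∂μ x₀ := by linarith
  have key : ∀ M : ℝ,
      I (fun x s => if x = x₀ then -M / s else 0) 0
        = M * ((∑ y, Q x₀ y) - ∫ s, 1 / s ∂μ x₀) := by
    intro M
    rw [hI]
    have h1 : (∑ x, ∑ y, Q x y * ((0 : E → E → ℝ) x y -
        Real.log (∑ z, p x z * Real.exp ((0 : E → E → ℝ) x z)))) = 0 := by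
      simp [hp1]
    rw [h1, zero_add]
    have h2 : ∀ x ∈ Finset.univ, x ≠ x₀ →
        ((∫ s, (if x = x₀ then -M / s else 0) ∂μ x)
          - ∑ y, Q x y * Real.log (∫ s,
              Real.exp (s * (if x = x₀ then -M / s else 0)) ∂ψ x)) = 0 := by
      intro x _ hx
      have := hψ x
      simp [hx]
    rw [Finset.sum_eq_single_of_mem x₀ (Finset.mem_univ x₀) h2]
    simp only [eq_self_iff_true, if_true]
    have hμint : (∫ s, -M / s ∂μ x₀) = -M * ∫ s, 1 / s ∂μ x₀ := by
      rw [← MeasureTheory.integral_const_mul]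
      congr 1 with s
      rw [mul_one_div]
    have hψae : ∀ᵐ s ∂ψ x₀, s ∈ Set.Ioi (0:ℝ) := by
      rw [MeasureTheory.ae_iff]
      simpa [Set.compl_def] using hψs x₀
    have hψint : (∫ s, Real.exp (s * (-M / s)) ∂ψ x₀) = Real.exp (-M) := by
      have := hψ x₀
      rw [integral_congr_ae (g := fun _ => Real.exp (-M))
        (hψae.mono fun s hs => by
          have hs0 : s ≠ 0 := ne_of_gt hs
          field_simp)]
      simp
    rw [hμint, hψint, Real.log_exp, ← Finset.sum_mul]
    ring
  constructor
  · intro M _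
    rw [key M]
  · rw [iSup_eq_top]
    intro b hb
    obtain ⟨c, hbc, -⟩ := EReal.lt_iff_exists_real_btwn.mp hb
    set g := (∑ y, Q x₀ y) - ∫ s, 1 / s ∂μ x₀ with hg
    set M := (|c| + 1) / g with hM
    refine ⟨fun x s => if x = x₀ then -M / s else 0, lt_of_lt_of_le hbc ?_⟩
    have hle : (c : ℝ) ≤ I (fun x s => if x = x₀ then -M / s else 0) 0 := by
      rw [key M, hM, div_mul_cancel₀ _ (ne_of_gt gap_pos)]
      have := abs_nonneg c
      have := le_abs_self c
      linarith
    calc ((c : ℝ) : EReal) ≤ ((I (fun x s => if x = x₀ then -M / s else 0) 0 : ℝ) : EReal) :=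
          EReal.coe_le_coe_iff.mpr hle
      _ ≤ ⨆ H : E → E → ℝ, ((I (fun x s => if x = x₀ then -M / s else 0) H : ℝ) : EReal) :=
          le_iSup (fun H => ((I (fun x s => if x = x₀ then -M / s else 0) H : ℝ) : EReal)) 0
end

section
/- Let P, Q be probability measures on a measurable space and V an event with Q(V) > 0 and Q absolutely continuous with respect to P. Then log P(V) ≥ −(H(Q|P) + e^{−1})/Q(V) + log Q(V), where H(Q|P) = ∫ log(dQ/dP) dQ is the relative entropy. -/
open MeasureTheory Filter Set

lemma aux_mul_log_ge (x : ℝ) (hx : 0 ≤ x) : x * Real.log x ≥ -Real.exp (-1) := by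
  rcases eq_or_lt_of_le hx with h | h
  · simp [← h]; positivity
  · have h1 : Real.log x⁻¹ ≤ x⁻¹ * Real.exp (-1) := by
      have := Real.log_le_sub_one_of_pos (x := x⁻¹ * Real.exp (-1)) (by positivity)
      rw [Real.log_mul (by positivity) (Real.exp_ne_zero _), Real.log_exp] at this
      linarith
    have h2 : x * Real.log x⁻¹ ≤ Real.exp (-1) := by
      calc x * Real.log x⁻¹ ≤ x * (x⁻¹ * Real.exp (-1)) := by
            exact mul_le_mul_of_nonneg_left h1 hx
        _ = Real.exp (-1) := by field_simp
    rw [Real.log_inv] at h2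
    nlinarith

lemma aux_mul_log_ge' (c x : ℝ) (hc : 0 < c) (hx : 0 ≤ x) :
    x * Real.log x ≥ (1 - Real.log c) * x - c⁻¹ * (x * x⁻¹) := by
  rcases eq_or_lt_of_le hx with h | h
  · simp [← h]
  · have h1 : Real.log x⁻¹ ≤ x⁻¹ * c⁻¹ - 1 + Real.log c := by
      have := Real.log_le_sub_one_of_pos (x := x⁻¹ * c⁻¹) (by positivity)
      rw [Real.log_mul (by positivity) (by positivity), Real.log_inv c] at this
      linarith
    have hxx0 : x * x⁻¹ = 1 := mul_inv_cancel₀ h.ne'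
    have h3 : x * (x⁻¹ * c⁻¹ - 1 + Real.log c) = c⁻¹ - x + x * Real.log c := by
      rw [mul_add, mul_sub, ← mul_assoc, hxx0]; ring
    have h2 : x * Real.log x⁻¹ ≤ c⁻¹ - x + x * Real.log c := by
      have := mul_le_mul_of_nonneg_left h1 hx
      linarith [h3 ▸ this]
    rw [Real.log_inv] at h2
    have hxx : x * x⁻¹ = 1 := mul_inv_cancel₀ h.ne'
    rw [hxx]
    nlinarith

/-- Entropy inequality for large-deviation lower bounds: if `Q ≪ P` are
probability measures, `V` is an event with `Q(V) > 0`, and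
`H(Q|P) = ∫ log(dQ/dP) dQ` is the relative entropy, then
`log P(V) ≥ -(H(Q|P) + e⁻¹)/Q(V) + log Q(V)`. -/
theorem stmt19 {α : Type*} [MeasurableSpace α] (P Q : Measure α)
    [IsProbabilityMeasure P] [IsProbabilityMeasure Q] (hac : Q ≪ P)
    (V : Set α) (hV : MeasurableSet V) (hQV : Q V ≠ 0)
    (hint : Integrable (fun ω => Real.log ((Q.rnDeriv P ω).toReal)) Q) :
    Real.log ((P V).toReal) ≥
      -((∫ ω, Real.log ((Q.rnDeriv P ω).toReal) ∂Q) + Real.exp (-1)) / (Q V).toReal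
        + Real.log ((Q V).toReal) := by
  set f : α → ℝ := fun x => (Q.rnDeriv P x).toReal with hf_def
  set L : α → ℝ := fun x => Real.log (f x) with hL_def
  set g : α → ℝ := fun x => f x * (f x)⁻¹ with hg_def
  have hf_nonneg : ∀ x, 0 ≤ f x := fun x => ENNReal.toReal_nonneg
  have hf_meas : Measurable f := (Measure.measurable_rnDeriv Q P).ennreal_toReal
  have hg01 : ∀ x, 0 ≤ g x ∧ g x ≤ 1 := by
    intro x
    rcases eq_or_lt_of_le (hf_nonneg x) with h | h
    · simp [hg_def, ← h]
    · simp [hg_def, mul_inv_cancel₀ h.ne']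
  have hPV : P V ≠ 0 := fun h => hQV (hac h)
  have hqV : 0 < (Q V).toReal := ENNReal.toReal_pos hQV (measure_ne_top Q V)
  have hpV : 0 < (P V).toReal := ENNReal.toReal_pos hPV (measure_ne_top P V)
  set qV := (Q V).toReal
  set pV := (P V).toReal
  set c : ℝ := pV / qV with hc_def
  have hc : 0 < c := div_pos hpV hqV
  -- integrability facts
  have hfL_int : Integrable (fun x => f x * L x) P := by
    have := (integrable_rnDeriv_smul_iff hac (f := L)).mpr hint
    simpa [smul_eq_mul] using this
  have hf_int : Integrable f P := Measure.integrable_toReal_rnDeriv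
  have hg_int : Integrable g P := by
    refine (integrable_const (1 : ℝ)).mono' ((hf_meas.mul hf_meas.inv).aestronglyMeasurable) ?_
    refine Eventually.of_forall fun x => ?_
    rw [Real.norm_eq_abs, abs_of_nonneg (hg01 x).1]
    exact (hg01 x).2
  -- transfer: ∫_V L dQ = ∫_V f·L dP
  have hVtrans : ∫ x in V, f x * L x ∂P = ∫ x in V, L x ∂Q := by
    simpa [smul_eq_mul] using setIntegral_rnDeriv_smul hac hV (f := L)
  have hVctrans : ∫ x in Vᶜ, f x * L x ∂P = ∫ x in Vᶜ, L x ∂Q := by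
    simpa [smul_eq_mul] using setIntegral_rnDeriv_smul hac hV.compl (f := L)
  have hfone : ∫ x in V, f x ∂P = qV := by
    have := setIntegral_rnDeriv_smul hac hV (f := fun _ : α => (1 : ℝ))
    simp [smul_eq_mul] at this; exact this
  -- Step B : ∫_{Vᶜ} L dQ ≥ -e⁻¹
  have hB : -Real.exp (-1) ≤ ∫ x in Vᶜ, L x ∂Q := by
    rw [← hVctrans]
    have h1 : ∫ x in Vᶜ, (-Real.exp (-1)) ∂P ≤ ∫ x in Vᶜ, f x * L x ∂P := by
      refine setIntegral_mono_on (integrableOn_const (measure_ne_top P Vᶜ))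
        hfL_int.integrableOn hV.compl (fun x _ => ?_)
      exact aux_mul_log_ge (f x) (hf_nonneg x)
    have h2 : -Real.exp (-1) ≤ ∫ x in Vᶜ, (-Real.exp (-1)) ∂P := by
      rw [setIntegral_const, smul_eq_mul, measureReal_def]
      have h3 : (P Vᶜ).toReal ≤ 1 :=
        ENNReal.toReal_mono (by simp) (prob_le_one (μ := P) (s := Vᶜ))
      nlinarith [Real.exp_pos (-1 : ℝ), ENNReal.toReal_nonneg (a := P Vᶜ)]
    linarith
  -- Step A : ∫_V L dQ ≥ qV * (log qV - log pV)
  have hA : qV * (Real.log qV - Real.log pV) ≤ ∫ x in V, L x ∂Q := by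
    rw [← hVtrans]
    have h1 : ∫ x in V, ((1 - Real.log c) * f x - c⁻¹ * g x) ∂P
        ≤ ∫ x in V, f x * L x ∂P := by
      refine setIntegral_mono_on
        (((hf_int.const_mul _).sub (hg_int.const_mul _)).integrableOn)
        hfL_int.integrableOn hV (fun x _ => ?_)
      exact aux_mul_log_ge' c (f x) hc (hf_nonneg x)
    have h2 : ∫ x in V, ((1 - Real.log c) * f x - c⁻¹ * g x) ∂P
        = (1 - Real.log c) * qV - c⁻¹ * ∫ x in V, g x ∂P := by
      rw [integral_sub ((hf_int.integrableOn).const_mul _) ((hg_int.integrableOn).const_mul _),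
        integral_const_mul, integral_const_mul, hfone]
    have h3 : ∫ x in V, g x ∂P ≤ pV := by
      calc ∫ x in V, g x ∂P ≤ ∫ x in V, (1 : ℝ) ∂P :=
            setIntegral_mono_on hg_int.integrableOn
              (integrableOn_const (measure_ne_top P V)) hV
              (fun x _ => (hg01 x).2)
        _ = pV := by simp [measureReal_def]; rfl
    have h5 : c⁻¹ * pV = qV := by
      rw [hc_def]; field_simp
    have h6 : (1 - Real.log c) * qV - c⁻¹ * (∫ x in V, g x ∂P)
        ≥ (1 - Real.log c) * qV - c⁻¹ * pV := by
      have := mul_le_mul_of_nonneg_left h3 (inv_nonneg.2 hc.le)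
      linarith
    have h7 : (1 - Real.log c) * qV - c⁻¹ * pV = qV * (Real.log qV - Real.log pV) := by
      rw [h5, hc_def, Real.log_div hpV.ne' hqV.ne']
      ring
    rw [h2] at h1
    linarith
  -- combine
  have hsplit : (∫ x in V, L x ∂Q) + ∫ x in Vᶜ, L x ∂Q = ∫ x, L x ∂Q :=
    integral_add_compl hV hint
  have hkey : qV * (Real.log qV - Real.log pV) ≤ (∫ x, L x ∂Q) + Real.exp (-1) := by
    linarith
  have hdiv : Real.log qV - Real.log pV ≤ ((∫ x, L x ∂Q) + Real.exp (-1)) / qV := by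
    rw [le_div_iff₀ hqV]
    linarith [hkey]
  have heq : (∫ ω, Real.log ((Q.rnDeriv P ω).toReal) ∂Q) = ∫ x, L x ∂Q := rfl
  rw [heq, ge_iff_le, neg_div]
  linarith [hdiv]
end
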